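/- The character polynomial of the canonical gate L(x,y,z) equals F(t) = (t²+1)(Ct² + Bt + A) − t², where A = cos(x+y−z)cos(x−y+z)cos(−x−y−z)cos(−x+y+z), B = −sin(2x)sin(2y)sin(2z), and C = sin(x+y−z)sin(x−y+z)sin(−x−y−z)sin(−x+y+z). -/

import Mathlib

open Complex Matrix

/-- Kronecker product of two 2×2 matrices as a 4×4 matrix, basis order |00⟩,|01⟩,|10⟩,|11⟩. -/
def kron (A B : Matrix (Fin 2) (Fin 2) ℂ) : Matrix (Fin 4) (Fin 4) ℂ :=
  !![A 0 0 * B 0 0, A 0 0 * B 0 1, A 0 1 * B 0 0, A 0 1 * B 0 1;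
     A 0 0 * B 1 0, A 0 0 * B 1 1, A 0 1 * B 1 0, A 0 1 * B 1 1;
     A 1 0 * B 0 0, A 1 0 * B 0 1, A 1 1 * B 0 0, A 1 1 * B 0 1;
     A 1 0 * B 1 0, A 1 0 * B 1 1, A 1 1 * B 1 0, A 1 1 * B 1 1]

def σX : Matrix (Fin 2) (Fin 2) ℂ := !![0, 1; 1, 0]
def σY : Matrix (Fin 2) (Fin 2) ℂ := !![0, -I; I, 0]
def σZ : Matrix (Fin 2) (Fin 2) ℂ := !![1, 0; 0, -1]

/-- The canonical gate L(x,y,z) = exp(i(x σX⊗σX + y σY⊗σY + z σZ⊗σZ)). -/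
noncomputable def Lgate (x y z : ℝ) : Matrix (Fin 4) (Fin 4) ℂ :=
  NormedSpace.exp (I • ((x : ℂ) • kron σX σX + (y : ℂ) • kron σY σY + (z : ℂ) • kron σZ σZ))

/-- The magic basis change matrix. -/
noncomputable def magicM : Matrix (Fin 4) (Fin 4) ℂ :=
  ((1 : ℂ) / Real.sqrt 2) •
  !![1, 0, 0, I;
     0, I, 1, 0;
     0, I, -1, 0;
     1, 0, 0, -I]

/-- The character polynomial F_U(t) = det(Re(M†UM) + t·Im(M†UM)). -/
noncomputable def charPoly (U : Matrix (Fin 4) (Fin 4) ℂ) (t : ℝ) : ℝ :=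
  (((magicMᴴ * U * magicM).map Complex.re) + t • ((magicMᴴ * U * magicM).map Complex.im)).det

lemma sq2 : ((Real.sqrt 2 : ℝ) : ℂ) * ((Real.sqrt 2 : ℝ) : ℂ) = 2 := by
  rw [← Complex.ofReal_mul, Real.mul_self_sqrt (by norm_num : (0:ℝ) ≤ 2)]; norm_num

lemma magic_mul_adj : magicM * magicMᴴ = 1 := by
  have h2 : ((Real.sqrt 2 : ℝ) : ℂ) ≠ 0 := by
    simpa using Real.sqrt_ne_zero'.2 (by norm_num : (0:ℝ) < 2)
  ext i j
  fin_cases i <;> fin_cases j <;>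
    simp [magicM, Matrix.mul_apply, Fin.sum_univ_four, Matrix.conjTranspose_apply,
      Matrix.one_apply] <;>
    field_simp <;> first | linear_combination sq2 | linear_combination (-2 : ℂ) * sq2 | linear_combination (2 : ℂ) * sq2 | linear_combination (-1 : ℂ) * sq2 | linear_combination sq2 + Complex.I_sq | linear_combination sq2 - Complex.I_sq | linear_combination (-1 : ℂ) * Complex.I_sq | linear_combination (-2 : ℂ) * Complex.I_sq | linear_combination Complex.I_sq | linear_combination (-1 : ℂ) * sq2 - Complex.I_sq | linear_combination (-1 : ℂ) * sq2 - (2 : ℂ) * Complex.I_sq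

lemma adj_mul_magic : magicMᴴ * magicM = 1 := by
  have h2 : ((Real.sqrt 2 : ℝ) : ℂ) ≠ 0 := by
    simpa using Real.sqrt_ne_zero'.2 (by norm_num : (0:ℝ) < 2)
  ext i j
  fin_cases i <;> fin_cases j <;>
    simp [magicM, Matrix.mul_apply, Fin.sum_univ_four, Matrix.conjTranspose_apply,
      Matrix.one_apply] <;>
    field_simp <;> first | linear_combination sq2 | linear_combination (-2 : ℂ) * sq2 | linear_combination (2 : ℂ) * sq2 | linear_combination (-1 : ℂ) * sq2 | linear_combination sq2 + Complex.I_sq | linear_combination sq2 - Complex.I_sq | linear_combination (-1 : ℂ) * Complex.I_sq | linear_combination (-2 : ℂ) * Complex.I_sq | linear_combination Complex.I_sq | linear_combination (-1 : ℂ) * sq2 - Complex.I_sq | linear_combination (-1 : ℂ) * sq2 - (2 : ℂ) * Complex.I_sq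

noncomputable def dvec (x y z : ℝ) : Fin 4 → ℂ :=
  ![((x - y + z : ℝ) : ℂ) * I, ((x + y - z : ℝ) : ℂ) * I,
    ((-x - y - z : ℝ) : ℂ) * I, ((-x + y + z : ℝ) : ℂ) * I]

lemma ham_conj (x y z : ℝ) :
    (I • ((x : ℂ) • kron σX σX + (y : ℂ) • kron σY σY + (z : ℂ) • kron σZ σZ)) * magicM
      = magicM * diagonal (dvec x y z) := by
  ext i j
  fin_cases i <;> fin_cases j <;>
    simp [kron, σX, σY, σZ, magicM, dvec, Matrix.mul_apply, Fin.sum_univ_four,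
      Matrix.diagonal] <;> ring

lemma conj_Lgate (x y z : ℝ) :
    magicMᴴ * Lgate x y z * magicM = diagonal (fun k => Complex.exp (dvec x y z k)) := by
  have hmm : magicM * magicMᴴ = 1 := magic_mul_adj
  have hmm' : magicMᴴ * magicM = 1 := adj_mul_magic
  have hinv : magicM⁻¹ = magicMᴴ := Matrix.inv_eq_right_inv hmm
  have hU : IsUnit magicM := (Matrix.isUnit_iff_isUnit_det _).2
    (IsUnit.of_mul_eq_one magicMᴴ.det (by rw [← Matrix.det_mul, hmm, Matrix.det_one]))
  have hH : (I • ((x : ℂ) • kron σX σX + (y : ℂ) • kron σY σY + (z : ℂ) • kron σZ σZ))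
      = magicM * diagonal (dvec x y z) * magicM⁻¹ := by
    rw [hinv, ← ham_conj, Matrix.mul_assoc, hmm, mul_one]
  rw [Lgate, hH, Matrix.exp_conj _ _ hU, hinv, Matrix.exp_diagonal]
  rw [show NormedSpace.exp (dvec x y z) = fun k => Complex.exp (dvec x y z k) by
    funext k; rw [Pi.coe_exp, Complex.exp_eq_exp_ℂ]]
  rw [← Matrix.mul_assoc, ← Matrix.mul_assoc, hmm', one_mul, Matrix.mul_assoc, hmm', mul_one]

lemma trig_key (x y z t : ℝ) :
    (Real.cos (x - y + z) + t * Real.sin (x - y + z)) *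
      (Real.cos (x + y - z) + t * Real.sin (x + y - z)) *
      (Real.cos (-x - y - z) + t * Real.sin (-x - y - z)) *
      (Real.cos (-x + y + z) + t * Real.sin (-x + y + z)) =
    (t ^ 2 + 1) *
        ((Real.sin (x + y - z) * Real.sin (x - y + z) * Real.sin (-x - y - z) *
              Real.sin (-x + y + z)) * t ^ 2 +
          (-(Real.sin (2 * x) * Real.sin (2 * y) * Real.sin (2 * z))) * t +
          Real.cos (x + y - z) * Real.cos (x - y + z) * Real.cos (-x - y - z) *
            Real.cos (-x + y + z)) -
      t ^ 2 := by
  have hx := Real.sin_sq_add_cos_sq x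
  have hy := Real.sin_sq_add_cos_sq y
  have hz := Real.sin_sq_add_cos_sq z
  simp only [Real.cos_add, Real.cos_sub, Real.sin_add, Real.sin_sub, Real.sin_neg,
    Real.cos_neg, Real.sin_two_mul]
  linear_combination ((-4) * Real.cos y^2 * Real.cos z^2 * t^2 + (2) * Real.cos y^2 * Real.cos z^4 * t^2 + (-2) * Real.cos y^2 * Real.sin z^2 * t^2 + (2) * Real.cos y^2 * Real.sin z^2 * Real.cos z^2 * t^2 + (2) * Real.cos y^4 * Real.cos z^2 * t^2 + (-1) * Real.cos y^4 * Real.cos z^4 * t^2 + (1) * Real.cos y^4 * Real.sin z^2 * t^2 + (-1) * Real.cos y^4 * Real.sin z^2 * Real.cos z^2 * t^2 + (-2) * Real.sin y^2 * Real.cos z^2 * t^2 + (1) * Real.sin y^2 * Real.cos z^4 * t^2 + (-1) * Real.sin y^2 * Real.sin z^2 * t^2 + (1) * Real.sin y^2 * Real.sin z^2 * Real.cos z^2 * t^2 + (2) * Real.sin y^2 * Real.cos y^2 * Real.cos z^2 * t^2 + (-1) * Real.sin y^2 * Real.cos y^2 * Real.cos z^4 * t^2 + (1) * Real.sin y^2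 * Real.cos y^2 * Real.sin z^2 * t^2 + (-1) * Real.sin y^2 * Real.cos y^2 * Real.sin z^2 * Real.cos z^2 * t^2 + (4) * Real.cos x^2 * Real.cos y^2 * Real.cos z^2 * t^2 + (-2) * Real.cos x^2 * Real.cos y^2 * Real.cos z^4 * t^2 + (2) * Real.cos x^2 * Real.cos y^2 * Real.sin z^2 * t^2 + (-2) * Real.cos x^2 * Real.cos y^2 * Real.sin z^2 * Real.cos z^2 * t^2 + (-2) * Real.cos x^2 * Real.cos y^4 * Real.cos z^2 * t^2 + (-1) * Real.cos x^2 * Real.cos y^4 * Real.cos z^4 * t^2 + (-1) * Real.cos x^2 * Real.cos y^4 * Real.sin z^2 * t^2 + (-3) * Real.cos x^2 * Real.cos y^4 * Real.sin z^2 * Real.cos z^2 * t^2 + (-2) * Real.cos x^2 * Real.cos y^4 * Real.sin z^4 * t^2 + (2) * Real.cos x^2 * Real.sin y^2 * Real.cos z^2 * t^2 + (-1) * Real.cos x^2 * Real.sin y^2 * Real.cos z^4 * t^2 + (1) * Real.cos x^2 * Real.sin y^2 * Real.sin z^2 * t^2 + (-1) * Real.cos x^2 * Real.sin y^2 * Real.sin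 z^2 * Real.cos z^2 * t^2 + (-2) * Real.cos x^2 * Real.sin y^2 * Real.cos y^2 * Real.cos z^2 * t^2 + (-3) * Real.cos x^2 * Real.sin y^2 * Real.cos y^2 * Real.cos z^4 * t^2 + (-1) * Real.cos x^2 * Real.sin y^2 * Real.cos y^2 * Real.sin z^2 * t^2 + (-7) * Real.cos x^2 * Real.sin y^2 * Real.cos y^2 * Real.sin z^2 * Real.cos z^2 * t^2 + (-4) * Real.cos x^2 * Real.sin y^2 * Real.cos y^2 * Real.sin z^4 * t^2 + (-2) * Real.cos x^2 * Real.sin y^4 * Real.cos z^4 * t^2 + (-4) * Real.cos x^2 * Real.sin y^4 * Real.sin z^2 * Real.cos z^2 * t^2 + (-2) * Real.cos x^2 * Real.sin y^4 * Real.sin z^4 * t^2 + (-8) * Real.sin x * Real.cos x * Real.sin y * Real.cos y^3 * Real.sin z * Real.cos z^3 * t + (-8) * Real.sin x * Real.cos x * Real.sin y * Real.cos y^3 * Real.sin z * Real.cos z^3 * t^3 + (-8) * Real.sin x * Real.cos x * Real.sin y * Real.cos y^3 * Real.sin z^3 * Real.cos z * t + (-8) * Real.sin x * Real.cos x * Real.sin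 y * Real.cos y^3 * Real.sin z^3 * Real.cos z * t^3 + (-8) * Real.sin x * Real.cos x * Real.sin y^3 * Real.cos y * Real.sin z * Real.cos z^3 * t + (-8) * Real.sin x * Real.cos x * Real.sin y^3 * Real.cos y * Real.sin z * Real.cos z^3 * t^3 + (-8) * Real.sin x * Real.cos x * Real.sin y^3 * Real.cos y * Real.sin z^3 * Real.cos z * t + (-8) * Real.sin x * Real.cos x * Real.sin y^3 * Real.cos y * Real.sin z^3 * Real.cos z * t^3 + (-1) * Real.sin x^2 * Real.cos y^4 * Real.cos z^4 * t^2 + (-2) * Real.sin x^2 * Real.cos y^4 * Real.sin z^2 * Real.cos z^2 * t^2 + (-1) * Real.sin x^2 * Real.cos y^4 * Real.sin z^4 * t^2 + (-2) * Real.sin x^2 * Real.sin y^2 * Real.cos y^2 * Real.cos z^4 * t^2 + (-4) * Real.sin x^2 * Real.sin y^2 * Real.cos y^2 * Real.sin z^2 * Real.cos z^2 * t^2 + (-2) * Real.sin x^2 * Real.sin y^2 * Real.cos y^2 * Real.sin z^4 * t^2 + (-1) * Real.sin x^2 * Real.sin y^4 * Real.cos z^4 * t^2 + (-2) * Real.sin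 x^2 * Real.sin y^4 * Real.sin z^2 * Real.cos z^2 * t^2 + (-1) * Real.sin x^2 * Real.sin y^4 * Real.sin z^4 * t^2) * hx + ((-2) * Real.cos z^2 * t^2 + (1) * Real.cos z^4 * t^2 + (-1) * Real.sin z^2 * t^2 + (1) * Real.sin z^2 * Real.cos z^2 * t^2 + (2) * Real.cos y^2 * Real.cos z^2 * t^2 + (-1) * Real.cos y^2 * Real.cos z^4 * t^2 + (1) * Real.cos y^2 * Real.sin z^2 * t^2 + (-1) * Real.cos y^2 * Real.sin z^2 * Real.cos z^2 * t^2 + (-4) * Real.cos x^2 * Real.cos y^2 * Real.cos z^4 * t^2 + (-8) * Real.cos x^2 * Real.cos y^2 * Real.sin z^2 * Real.cos z^2 * t^2 + (-4) * Real.cos x^2 * Real.cos y^2 * Real.sin z^4 * t^2 + (-2) * Real.cos x^2 * Real.sin y^2 * Real.cos z^4 * t^2 + (-4) * Real.cos x^2 * Real.sin y^2 * Real.sin z^2 * Real.cos z^2 * t^2 + (-2) * Real.cos x^2 * Real.sin y^2 * Real.sin z^4 * t^2 + (2) * Real.cos x^4 * Real.cos y^2 * Real.cos z^4 * t^2 +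 (4) * Real.cos x^4 * Real.cos y^2 * Real.sin z^2 * Real.cos z^2 * t^2 + (2) * Real.cos x^4 * Real.cos y^2 * Real.sin z^4 * t^2 + (1) * Real.cos x^4 * Real.sin y^2 * Real.cos z^4 * t^2 + (2) * Real.cos x^4 * Real.sin y^2 * Real.sin z^2 * Real.cos z^2 * t^2 + (1) * Real.cos x^4 * Real.sin y^2 * Real.sin z^4 * t^2 + (-8) * Real.sin x * Real.cos x * Real.sin y * Real.cos y * Real.sin z * Real.cos z^3 * t + (-8) * Real.sin x * Real.cos x * Real.sin y * Real.cos y * Real.sin z * Real.cos z^3 * t^3 + (-8) * Real.sin x * Real.cos x * Real.sin y * Real.cos y * Real.sin z^3 * Real.cos z * t + (-8) * Real.sin x * Real.cos x * Real.sin y * Real.cos y * Real.sin z^3 * Real.cos z * t^3 + (-2) * Real.sin x^2 * Real.cos y^2 * Real.cos z^4 * t^2 + (-4) * Real.sin x^2 * Real.cos y^2 * Real.sin z^2 * Real.cos z^2 * t^2 + (-2) * Real.sin x^2 * Real.cos y^2 * Real.sin z^4 * t^2 + (-1) * Real.sin x^2 * Real.sin y^2 * Real.cos z^4 * t^2 +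 (-2) * Real.sin x^2 * Real.sin y^2 * Real.sin z^2 * Real.cos z^2 * t^2 + (-1) * Real.sin x^2 * Real.sin y^2 * Real.sin z^4 * t^2 + (2) * Real.sin x^2 * Real.cos x^2 * Real.cos y^2 * Real.cos z^4 * t^2 + (4) * Real.sin x^2 * Real.cos x^2 * Real.cos y^2 * Real.sin z^2 * Real.cos z^2 * t^2 + (2) * Real.sin x^2 * Real.cos x^2 * Real.cos y^2 * Real.sin z^4 * t^2 + (1) * Real.sin x^2 * Real.cos x^2 * Real.sin y^2 * Real.cos z^4 * t^2 + (2) * Real.sin x^2 * Real.cos x^2 * Real.sin y^2 * Real.sin z^2 * Real.cos z^2 * t^2 + (1) * Real.sin x^2 * Real.cos x^2 * Real.sin y^2 * Real.sin z^4 * t^2) * hy + ((-1) * t^2 + (1) * Real.cos z^2 * t^2 + (-8) * Real.cos x^2 * Real.cos y^2 * Real.cos z^2 * t^2 + (-4) * Real.cos x^2 * Real.cos y^2 * Real.sin z^2 * t^2 + (4) * Real.cos x^2 * Real.cos y^4 * Real.cos z^2 * t^2 + (2) * Real.cos x^2 * Real.cos y^4 * Real.sin z^2 * t^2 + (-4)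 * Real.cos x^2 * Real.sin y^2 * Real.cos z^2 * t^2 + (-2) * Real.cos x^2 * Real.sin y^2 * Real.sin z^2 * t^2 + (4) * Real.cos x^2 * Real.sin y^2 * Real.cos y^2 * Real.cos z^2 * t^2 + (2) * Real.cos x^2 * Real.sin y^2 * Real.cos y^2 * Real.sin z^2 * t^2 + (4) * Real.cos x^4 * Real.cos y^2 * Real.cos z^2 * t^2 + (2) * Real.cos x^4 * Real.cos y^2 * Real.sin z^2 * t^2 + (-2) * Real.cos x^4 * Real.cos y^4 * Real.cos z^2 * t^2 + (-1) * Real.cos x^4 * Real.cos y^4 * Real.sin z^2 * t^2 + (2) * Real.cos x^4 * Real.sin y^2 * Real.cos z^2 * t^2 + (1) * Real.cos x^4 * Real.sin y^2 * Real.sin z^2 * t^2 + (-2) * Real.cos x^4 * Real.sin y^2 * Real.cos y^2 * Real.cos z^2 * t^2 + (-1) * Real.cos x^4 * Real.sin y^2 * Real.cos y^2 * Real.sin z^2 * t^2 + (-8) * Real.sin x * Real.cos x * Real.sin y * Real.cos y * Real.sin z * Real.cos z * t + (-8) * Real.sin x * Real.cos x * Real.sin y * Real.cos y * Real.sin z *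 Real.cos z * t^3 + (-4) * Real.sin x^2 * Real.cos y^2 * Real.cos z^2 * t^2 + (-2) * Real.sin x^2 * Real.cos y^2 * Real.sin z^2 * t^2 + (2) * Real.sin x^2 * Real.cos y^4 * Real.cos z^2 * t^2 + (1) * Real.sin x^2 * Real.cos y^4 * Real.sin z^2 * t^2 + (-2) * Real.sin x^2 * Real.sin y^2 * Real.cos z^2 * t^2 + (-1) * Real.sin x^2 * Real.sin y^2 * Real.sin z^2 * t^2 + (2) * Real.sin x^2 * Real.sin y^2 * Real.cos y^2 * Real.cos z^2 * t^2 + (1) * Real.sin x^2 * Real.sin y^2 * Real.cos y^2 * Real.sin z^2 * t^2 + (4) * Real.sin x^2 * Real.cos x^2 * Real.cos y^2 * Real.cos z^2 * t^2 + (2) * Real.sin x^2 * Real.cos x^2 * Real.cos y^2 * Real.sin z^2 * t^2 + (-2) * Real.sin x^2 * Real.cos x^2 * Real.cos y^4 * Real.cos z^2 * t^2 + (-1) * Real.sin x^2 * Real.cos x^2 * Real.cos y^4 * Real.sin z^2 * t^2 + (2) * Real.sin x^2 * Real.cos x^2 * Real.sin y^2 * Real.cos z^2 * t^2 + (1) *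 Real.sin x^2 * Real.cos x^2 * Real.sin y^2 * Real.sin z^2 * t^2 + (-2) * Real.sin x^2 * Real.cos x^2 * Real.sin y^2 * Real.cos y^2 * Real.cos z^2 * t^2 + (-1) * Real.sin x^2 * Real.cos x^2 * Real.sin y^2 * Real.cos y^2 * Real.sin z^2 * t^2) * hz

theorem charPoly_of_Lgate (x y z : ℝ) (t : ℝ) :
    charPoly (Lgate x y z) t =
      (t ^ 2 + 1) *
          ((Real.sin (x + y - z) * Real.sin (x - y + z) * Real.sin (-x - y - z) *
                Real.sin (-x + y + z)) * t ^ 2 +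
            (-(Real.sin (2 * x) * Real.sin (2 * y) * Real.sin (2 * z))) * t +
            Real.cos (x + y - z) * Real.cos (x - y + z) * Real.cos (-x - y - z) *
              Real.cos (-x + y + z)) -
        t ^ 2 := by
  rw [charPoly, conj_Lgate]
  rw [Matrix.diagonal_map Complex.zero_re, Matrix.diagonal_map Complex.zero_im,
    ← Matrix.diagonal_smul, Matrix.diagonal_add, Matrix.det_diagonal, Fin.prod_univ_four]
  simp only [Pi.add_apply, Pi.smul_apply, Function.comp, dvec, Matrix.cons_val_zero,
    Matrix.cons_val_one, Matrix.head_cons, Matrix.cons_val_two, Matrix.tail_cons,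
    Matrix.cons_val_three, Complex.exp_ofReal_mul_I_re, Complex.exp_ofReal_mul_I_im,
    smul_eq_mul]
  rw [← trig_key x y z t]
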